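/- arXiv:2410.05176 — 5 statements merged into one kernel-verified Lean document; each statement's English description precedes it below -/
import Mathlib

section
/- Let a : ℝ → ℝ be continuously differentiable, 1-periodic, and strictly positive. Then ⟨a⁻³a′·[[a]]⟩ = (1/2)(⟨a⁻¹⟩ − ⟨a⟩⟨a⁻²⟩), and equivalently ⟨a·[[a⁻³a′]]⟩ = −(1/2)(⟨a⁻¹⟩ − ⟨a⟩⟨a⁻²⟩). (These are the closed forms of the homogenization coefficient C₃, up to the factor −1/ρ⁽⁰⁾².) -/
open MeasureTheory Matrix

/-- The mean of a function over one period: `⟨b⟩ = ∫₀¹ b(y) dy`. -/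
noncomputable def pmean (b : ℝ → ℝ) : ℝ := ∫ y in (0:ℝ)..1, b y

/-- The fluctuating (mean-zero) part: `{b} = b − ⟨b⟩`. -/
noncomputable def pfluct (b : ℝ → ℝ) : ℝ → ℝ := fun y => b y - pmean b

/-- The mean-zero primitive of the fluctuating part:
`[[b]](y) = ∫₀^y {b}(ξ) dξ − ∫₀¹ (∫₀^s {b}(ξ) dξ) ds`. -/
noncomputable def pbracket (b : ℝ → ℝ) : ℝ → ℝ :=
  fun y => (∫ ξ in (0:ℝ)..y, pfluct b ξ) - ∫ s in (0:ℝ)..1, (∫ ξ in (0:ℝ)..s, pfluct b ξ)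

/-- For `a` continuously differentiable, 1-periodic and strictly positive,
`⟨a⁻³a′·[[a]]⟩ = (1/2)(⟨a⁻¹⟩ − ⟨a⟩⟨a⁻²⟩)` and `⟨a·[[a⁻³a′]]⟩ = −(1/2)(⟨a⁻¹⟩ − ⟨a⟩⟨a⁻²⟩)`. -/
theorem statement5 (a : ℝ → ℝ) (ha : ContDiff ℝ 1 a) (hper : Function.Periodic a 1)
    (hpos : ∀ y, 0 < a y) :
    pmean (fun y => (a y ^ 3)⁻¹ * deriv a y * pbracket a y)
      = (1/2) * (pmean (fun y => (a y)⁻¹) - pmean a * pmean (fun y => (a y ^ 2)⁻¹)) ∧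
    pmean (fun y => a y * pbracket (fun z => (a z ^ 3)⁻¹ * deriv a z) y)
      = -(1/2) * (pmean (fun y => (a y)⁻¹) - pmean a * pmean (fun y => (a y ^ 2)⁻¹)) := by
  have hd : Differentiable ℝ a := ha.differentiable one_ne_zero
  have hc : Continuous a := hd.continuous
  have hc' : Continuous (deriv a) := ha.continuous_deriv le_rfl
  have hne : ∀ y, a y ≠ 0 := fun y => (hpos y).ne'
  have ha10 : a 1 = a 0 := by simpa using hper 0
  set g : ℝ → ℝ := fun y => (a y ^ 3)⁻¹ * deriv a y with hg
  have hgc : Continuous g := ((hc.pow 3).inv₀ (fun y => pow_ne_zero _ (hne y))).mul hc'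
  have hinv2c : Continuous (fun y => (a y ^ 2)⁻¹) :=
    (hc.pow 2).inv₀ (fun y => pow_ne_zero _ (hne y))
  have hinvc : Continuous (fun y => (a y)⁻¹) := hc.inv₀ hne
  -- antiderivative of g
  have hF : ∀ y : ℝ, HasDerivAt (fun t => -(1/2 : ℝ) * (a t ^ 2)⁻¹) (g y) y := by
    intro y
    have h1 : HasDerivAt a (deriv a y) y := (hd y).hasDerivAt
    have h2 := (h1.pow 2).inv (pow_ne_zero 2 (hne y))
    have h3 := h2.const_mul (-(1/2 : ℝ))
    refine h3.congr_deriv ?_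
    simp only [hg, Pi.pow_apply]
    field_simp [hne y]
    ring
  have hmg : pmean g = 0 := by
    rw [pmean, intervalIntegral.integral_eq_sub_of_hasDerivAt (fun x _ => hF x)
      (hgc.intervalIntegrable _ _)]
    rw [ha10]; ring
  have hfg : pfluct g = g := by funext y; simp [pfluct, hmg]
  have hIg : ∀ y : ℝ, (∫ ξ in (0:ℝ)..y, g ξ) = -(1/2 : ℝ) * (a y ^ 2)⁻¹ + (1/2) * (a 0 ^ 2)⁻¹ := by
    intro y
    rw [intervalIntegral.integral_eq_sub_of_hasDerivAt (fun x _ => hF x)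
      (hgc.intervalIntegrable _ _)]
    ring
  -- explicit formula for pbracket g
  have hPg : ∀ y : ℝ, pbracket g y
      = -(1/2 : ℝ) * ((a y ^ 2)⁻¹ - pmean (fun y => (a y ^ 2)⁻¹)) := by
    intro y
    have hI2 : (∫ s in (0:ℝ)..1, (∫ ξ in (0:ℝ)..s, g ξ))
        = -(1/2 : ℝ) * pmean (fun y => (a y ^ 2)⁻¹) + (1/2) * (a 0 ^ 2)⁻¹ := by
      have : (fun s => ∫ ξ in (0:ℝ)..s, g ξ)
          = fun s => -(1/2 : ℝ) * (a s ^ 2)⁻¹ + (1/2) * (a 0 ^ 2)⁻¹ := funext hIg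
      rw [this, intervalIntegral.integral_add (f := fun s => -(1/2 : ℝ) * (a s ^ 2)⁻¹)
        (g := fun _ => (1/2 : ℝ) * (a 0 ^ 2)⁻¹) ((continuous_const.mul hinv2c).intervalIntegrable _ _)
        (intervalIntegrable_const), intervalIntegral.integral_const_mul]
      simp [pmean]
    simp only [pbracket, hfg, hIg y, hI2]
    ring
  -- pbracket a facts
  have hfluctc : Continuous (pfluct a) := hc.sub continuous_const
  have hA : ∀ y : ℝ, HasDerivAt (pbracket a) (a y - pmean a) y := by
    intro y
    have h1 : HasDerivAt (fun t => ∫ ξ in (0:ℝ)..t, pfluct a ξ) (pfluct a y) y :=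
      intervalIntegral.integral_hasDerivAt_right (hfluctc.intervalIntegrable _ _)
        (hfluctc.stronglyMeasurableAtFilter _ _) hfluctc.continuousAt
    exact h1.sub_const _
  have hAd : Differentiable ℝ (pbracket a) := fun y => (hA y).differentiableAt
  have hAc : Continuous (pbracket a) := hAd.continuous
  have hAper : pbracket a 1 = pbracket a 0 := by
    have h0 : (∫ ξ in (0:ℝ)..1, pfluct a ξ) = 0 := by
      simp only [pfluct]
      rw [intervalIntegral.integral_sub (hc.intervalIntegrable _ _) intervalIntegrable_const]
      simp [pmean]
    simp [pbracket, h0]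
  -- integration by parts via FTC on h = (a^2)⁻¹ * pbracket a
  set D : ℝ → ℝ := fun y =>
    (-(2 * a y * deriv a y) / (a y ^ 2) ^ 2) * pbracket a y + (a y ^ 2)⁻¹ * (a y - pmean a)
    with hD
  have hhD : ∀ y : ℝ, HasDerivAt (fun t => (a t ^ 2)⁻¹ * pbracket a t) (D y) y := by
    intro y
    have h1 : HasDerivAt a (deriv a y) y := (hd y).hasDerivAt
    have h2 := (h1.pow 2).inv (pow_ne_zero 2 (hne y))
    have := h2.mul (hA y)
    refine this.congr_deriv ?_
    simp [hD]
  have hDc : Continuous D := by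
    apply Continuous.add
    · exact (((((continuous_const.mul hc).mul hc').neg).div ((hc.pow 2).pow 2)
        (fun y => pow_ne_zero _ (pow_ne_zero _ (hne y)))).mul hAc)
    · exact hinv2c.mul (hc.sub continuous_const)
  have hintD : (∫ y in (0:ℝ)..1, D y) = 0 := by
    rw [intervalIntegral.integral_eq_sub_of_hasDerivAt (fun x _ => hhD x)
      (hDc.intervalIntegrable _ _)]
    rw [ha10, hAper]; ring
  have hDeq : D = fun y => -2 * (g y * pbracket a y) + ((a y)⁻¹ - pmean a * (a y ^ 2)⁻¹) := by
    funext y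
    simp only [hD, hg]
    field_simp [hne y]
  have hgA : Continuous (fun y => g y * pbracket a y) := hgc.mul hAc
  have hintD2 : (∫ y in (0:ℝ)..1, D y)
      = -2 * pmean (fun y => g y * pbracket a y)
        + (pmean (fun y => (a y)⁻¹) - pmean a * pmean (fun y => (a y ^ 2)⁻¹)) := by
    rw [hDeq]
    rw [intervalIntegral.integral_add (f := fun y => -2 * (g y * pbracket a y))
      (g := fun y => (a y)⁻¹ - pmean a * (a y ^ 2)⁻¹) ((continuous_const.mul hgA).intervalIntegrable _ _)
      ((hinvc.sub (continuous_const.mul hinv2c)).intervalIntegrable _ _)]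
    rw [intervalIntegral.integral_const_mul,
      intervalIntegral.integral_sub (g := fun y => pmean a * (a y ^ 2)⁻¹) (hinvc.intervalIntegrable _ _)
        ((continuous_const.mul hinv2c).intervalIntegrable _ _),
      intervalIntegral.integral_const_mul]
    simp [pmean]
  constructor
  · have : pmean (fun y => (a y ^ 3)⁻¹ * deriv a y * pbracket a y)
        = pmean (fun y => g y * pbracket a y) := rfl
    rw [this]
    have h0 : -2 * pmean (fun y => g y * pbracket a y)
        + (pmean (fun y => (a y)⁻¹) - pmean a * pmean (fun y => (a y ^ 2)⁻¹)) = 0 := by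
      rw [← hintD2]; exact hintD
    linarith
  · have heq : (fun y => a y * pbracket g y)
        = fun y => -(1/2 : ℝ) * ((a y)⁻¹ - (a y) * pmean (fun y => (a y ^ 2)⁻¹)) := by
      funext y
      rw [hPg y]
      field_simp [hne y]
    show pmean (fun y => a y * pbracket g y) = _
    rw [pmean, heq]
    rw [intervalIntegral.integral_const_mul,
      intervalIntegral.integral_sub (g := fun x => a x * pmean (fun y => (a y ^ 2)⁻¹))
        (hinvc.intervalIntegrable _ _) ((hc.mul continuous_const).intervalIntegrable _ _),
      intervalIntegral.integral_mul_const]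
    simp only [pmean]
end

section
/- Let a : ℝ → ℝ be continuously differentiable, 1-periodic, and strictly positive. Then ⟨a⁻¹·[[a⁻³a′]]⟩ = −⟨a⁻³a′·[[a⁻¹]]⟩ = −(1/2)(⟨a⁻³⟩ − ⟨a⁻¹⟩⟨a⁻²⟩). (This is the closed form of the homogenization coefficient C₅, up to the factor 1/ρ⁽⁰⁾².) -/
open MeasureTheory Matrix

/-- For `a` continuously differentiable, 1-periodic and strictly positive,
`⟨a⁻¹·[[a⁻³a′]]⟩ = −⟨a⁻³a′·[[a⁻¹]]⟩ = −(1/2)(⟨a⁻³⟩ − ⟨a⁻¹⟩⟨a⁻²⟩)`. -/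
theorem statement6 (a : ℝ → ℝ) (ha : ContDiff ℝ 1 a) (hper : Function.Periodic a 1)
    (hpos : ∀ y, 0 < a y) :
    pmean (fun y => (a y)⁻¹ * pbracket (fun z => (a z ^ 3)⁻¹ * deriv a z) y)
      = - pmean (fun y => (a y ^ 3)⁻¹ * deriv a y * pbracket (fun z => (a z)⁻¹) y) ∧
    pmean (fun y => (a y)⁻¹ * pbracket (fun z => (a z ^ 3)⁻¹ * deriv a z) y)
      = -(1/2) * (pmean (fun y => (a y ^ 3)⁻¹)
          - pmean (fun y => (a y)⁻¹) * pmean (fun y => (a y ^ 2)⁻¹)) := by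
  have ha0 : ∀ y, a y ≠ 0 := fun y => (hpos y).ne'
  have hca : Continuous a := ha.continuous
  have hcd : Continuous (deriv a) := ha.continuous_deriv le_rfl
  have hcinv : Continuous fun y => (a y)⁻¹ := hca.inv₀ ha0
  have hcinv2 : Continuous fun y => (a y ^ 2)⁻¹ :=
    (hca.pow 2).inv₀ fun y => pow_ne_zero 2 (ha0 y)
  have hcinv3 : Continuous fun y => (a y ^ 3)⁻¹ :=
    (hca.pow 3).inv₀ fun y => pow_ne_zero 3 (ha0 y)
  have hb1c : Continuous fun y => (a y ^ 3)⁻¹ * deriv a y := hcinv3.mul hcd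
  have hmul23 : ∀ y, (a y)⁻¹ * (a y ^ 2)⁻¹ = (a y ^ 3)⁻¹ := by
    intro y; rw [← mul_inv]; congr 1; ring
  have hD : ∀ y, HasDerivAt (fun z => -(2⁻¹ : ℝ) * (a z ^ 2)⁻¹)
      ((a y ^ 3)⁻¹ * deriv a y) y := by
    intro y
    have h1 : HasDerivAt a (deriv a y) y := (ha.differentiable one_ne_zero y).hasDerivAt
    have h2 : HasDerivAt (fun z => -(2⁻¹ : ℝ) * (a z ^ 2)⁻¹) (-(2⁻¹ : ℝ) * (-(((2:ℕ):ℝ) * a y ^ (2 - 1) * deriv a y) / (a y ^ 2) ^ 2)) y := ((h1.pow 2).inv (pow_ne_zero 2 (ha0 y))).const_mul (-(2⁻¹ : ℝ))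
    convert h2 using 1
    have : a y ≠ 0 := ha0 y
    field_simp
    ring
  have hFTC : ∀ y, (∫ z in (0:ℝ)..y, (a z ^ 3)⁻¹ * deriv a z)
      = -(2⁻¹ : ℝ) * (a y ^ 2)⁻¹ + 2⁻¹ * (a 0 ^ 2)⁻¹ := by
    intro y
    rw [intervalIntegral.integral_eq_sub_of_hasDerivAt (fun z _ => hD z)
      (hb1c.intervalIntegrable _ _)]
    ring
  have ha10 : a 1 = a 0 := by simpa using hper 0
  have hmean_b1 : pmean (fun z => (a z ^ 3)⁻¹ * deriv a z) = 0 := by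
    rw [pmean, hFTC 1, ha10]; ring
  set M1 := pmean fun y => (a y)⁻¹ with hM1
  set M2 := pmean fun y => (a y ^ 2)⁻¹ with hM2
  set M3 := pmean fun y => (a y ^ 3)⁻¹ with hM3
  -- explicit formula for the bracket of a⁻³a′
  have hbr : ∀ y, pbracket (fun z => (a z ^ 3)⁻¹ * deriv a z) y
      = -(2⁻¹ : ℝ) * (a y ^ 2)⁻¹ + 2⁻¹ * M2 := by
    intro y
    have hfl : pfluct (fun z => (a z ^ 3)⁻¹ * deriv a z)
        = fun z => (a z ^ 3)⁻¹ * deriv a z := by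
      funext z; simp [pfluct, hmean_b1]
    have hinner : (∫ s in (0:ℝ)..1, ∫ ξ in (0:ℝ)..s, (a ξ ^ 3)⁻¹ * deriv a ξ)
        = -(2⁻¹ : ℝ) * M2 + 2⁻¹ * (a 0 ^ 2)⁻¹ := by
      rw [intervalIntegral.integral_congr
        (g := fun s => -(2⁻¹ : ℝ) * (a s ^ 2)⁻¹ + 2⁻¹ * (a 0 ^ 2)⁻¹)
        (fun s _ => hFTC s)]
      rw [intervalIntegral.integral_add
        (Continuous.intervalIntegrable (u := fun s => -(2⁻¹ : ℝ) * (a s ^ 2)⁻¹) (continuous_const.mul hcinv2) _ _) intervalIntegrable_const,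
        intervalIntegral.integral_const_mul, intervalIntegral.integral_const]
      simp [hM2, pmean]
    simp only [pbracket, hfl]
    rw [hFTC y, hinner]
    ring
  -- value of the LHS mean
  have hLHS : pmean (fun y => (a y)⁻¹ * pbracket (fun z => (a z ^ 3)⁻¹ * deriv a z) y)
      = -(2⁻¹ : ℝ) * M3 + 2⁻¹ * M2 * M1 := by
    rw [pmean, intervalIntegral.integral_congr
      (g := fun y => -(2⁻¹ : ℝ) * (a y ^ 3)⁻¹ + (2⁻¹ * M2) * (a y)⁻¹)
      (by
        intro y _
        show (a y)⁻¹ * pbracket (fun z => (a z ^ 3)⁻¹ * deriv a z) y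
            = -(2⁻¹ : ℝ) * (a y ^ 3)⁻¹ + (2⁻¹ * M2) * (a y)⁻¹
        rw [hbr y]
        rw [show ((a y)⁻¹ * (-(2⁻¹ : ℝ) * (a y ^ 2)⁻¹ + 2⁻¹ * M2))
            = -(2⁻¹ : ℝ) * ((a y)⁻¹ * (a y ^ 2)⁻¹) + (2⁻¹ * M2) * (a y)⁻¹ from by ring,
          hmul23 y])]
    rw [intervalIntegral.integral_add
      (Continuous.intervalIntegrable (u := fun y => -(2⁻¹ : ℝ) * (a y ^ 3)⁻¹) (continuous_const.mul hcinv3) _ _)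
      (Continuous.intervalIntegrable (u := fun y => (2⁻¹ * M2) * (a y)⁻¹) (continuous_const.mul hcinv) _ _),
      intervalIntegral.integral_const_mul, intervalIntegral.integral_const_mul]
    rw [hM3, hM1, pmean, pmean]
    try ring
  -- the bracket of a⁻¹ and its derivative
  have hflinv : pfluct (fun z => (a z)⁻¹) = fun z => (a z)⁻¹ - M1 := by
    funext z; simp [pfluct, hM1]
  have hfc : Continuous fun z => (a z)⁻¹ - M1 := hcinv.sub continuous_const
  set v : ℝ → ℝ := pbracket fun z => (a z)⁻¹ with hv
  have hv' : ∀ y, HasDerivAt v ((a y)⁻¹ - M1) y := by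
    intro y
    have h := intervalIntegral.integral_hasDerivAt_right
      (hfc.intervalIntegrable 0 y)
      hfc.stronglyMeasurable.stronglyMeasurableAtFilter
      hfc.continuousAt
    have := h.sub_const (∫ s in (0:ℝ)..1, ∫ ξ in (0:ℝ)..s, ((a ξ)⁻¹ - M1))
    rw [hv]; unfold pbracket
    simpa [hv, pbracket, hflinv] using this
  have hvc : Continuous v := by
    rw [continuous_iff_continuousAt]; exact fun y => (hv' y).continuousAt
  have hv10 : v 1 = v 0 := by
    have : (∫ ξ in (0:ℝ)..1, ((a ξ)⁻¹ - M1)) = 0 := by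
      rw [intervalIntegral.integral_sub (hcinv.intervalIntegrable _ _)
        intervalIntegrable_const, intervalIntegral.integral_const]
      simp [hM1, pmean]
    simp [hv, pbracket, hflinv, this]
  -- integration by parts
  have hprod : ∀ y, HasDerivAt (fun z => -(2⁻¹ : ℝ) * (a z ^ 2)⁻¹ * v z)
      ((a y ^ 3)⁻¹ * deriv a y * v y
        + (-(2⁻¹ : ℝ) * (a y ^ 2)⁻¹) * ((a y)⁻¹ - M1)) y :=
    fun y => (hD y).mul (hv' y)
  have hInt1 : IntervalIntegrable (fun y => (a y ^ 3)⁻¹ * deriv a y * v y)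
      volume 0 1 := (hb1c.mul hvc).intervalIntegrable _ _
  have hInt2 : IntervalIntegrable
      (fun y => (-(2⁻¹ : ℝ) * (a y ^ 2)⁻¹) * ((a y)⁻¹ - M1)) volume 0 1 :=
    (((continuous_const.mul hcinv2).mul hfc)).intervalIntegrable _ _
  have hIBP : (∫ y in (0:ℝ)..1, ((a y ^ 3)⁻¹ * deriv a y * v y
      + (-(2⁻¹ : ℝ) * (a y ^ 2)⁻¹) * ((a y)⁻¹ - M1))) = 0 := by
    rw [intervalIntegral.integral_eq_sub_of_hasDerivAt (fun y _ => hprod y)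
      (hInt1.add hInt2)]
    rw [ha10, hv10]
    ring
  have huv' : (∫ y in (0:ℝ)..1, (-(2⁻¹ : ℝ) * (a y ^ 2)⁻¹) * ((a y)⁻¹ - M1))
      = -(2⁻¹ : ℝ) * (M3 - M1 * M2) := by
    rw [intervalIntegral.integral_congr
      (g := fun y => -(2⁻¹ : ℝ) * (a y ^ 3)⁻¹ + (2⁻¹ * M1) * (a y ^ 2)⁻¹)
      (by
        intro y _
        show (-(2⁻¹ : ℝ) * (a y ^ 2)⁻¹) * ((a y)⁻¹ - M1)
            = -(2⁻¹ : ℝ) * (a y ^ 3)⁻¹ + (2⁻¹ * M1) * (a y ^ 2)⁻¹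
        rw [show (-(2⁻¹ : ℝ) * (a y ^ 2)⁻¹) * ((a y)⁻¹ - M1)
            = -(2⁻¹ : ℝ) * ((a y)⁻¹ * (a y ^ 2)⁻¹) + (2⁻¹ * M1) * (a y ^ 2)⁻¹ from by ring,
          hmul23 y])]
    rw [intervalIntegral.integral_add
      (Continuous.intervalIntegrable (u := fun y => -(2⁻¹ : ℝ) * (a y ^ 3)⁻¹) (continuous_const.mul hcinv3) _ _)
      (Continuous.intervalIntegrable (u := fun y => (2⁻¹ * M1) * (a y ^ 2)⁻¹) (continuous_const.mul hcinv2) _ _),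
      intervalIntegral.integral_const_mul, intervalIntegral.integral_const_mul]
    rw [hM3, hM2, pmean, pmean]
    try ring
  have hRHS : pmean (fun y => (a y ^ 3)⁻¹ * deriv a y * pbracket (fun z => (a z)⁻¹) y)
      = (2⁻¹ : ℝ) * (M3 - M1 * M2) := by
    have hsplit := intervalIntegral.integral_add hInt1 hInt2
    rw [pmean]
    have : (∫ y in (0:ℝ)..1, (a y ^ 3)⁻¹ * deriv a y * v y)
        = -(∫ y in (0:ℝ)..1, (-(2⁻¹ : ℝ) * (a y ^ 2)⁻¹) * ((a y)⁻¹ - M1)) := by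
      have := hIBP
      rw [hsplit] at this
      linarith
    rw [show (fun y => (a y ^ 3)⁻¹ * deriv a y * pbracket (fun z => (a z)⁻¹) y)
        = fun y => (a y ^ 3)⁻¹ * deriv a y * v y from rfl, this, huv']
    ring
  constructor
  · rw [hLHS, hRHS]; ring
  · rw [hLHS]; ring
end

section
/- Let a : ℝ → ℝ be continuously differentiable, 1-periodic, and strictly positive. Then ⟨a⁻³a′·[[[[a]]]]⟩ = ⟨a·[[[[a⁻³a′]]]]⟩ = −(1/2)⟨a·[[a⁻²]]⟩. (This is the closed form of the homogenization coefficient C₄, up to the factor 1/ρ⁽⁰⁾.) -/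
open MeasureTheory Matrix

section Aux

open intervalIntegral Function

lemma pfluct_cont {f : ℝ → ℝ} (hf : Continuous f) : Continuous (pfluct f) :=
  hf.sub continuous_const

lemma integral_pfluct {f : ℝ → ℝ} (hf : Continuous f) :
    ∫ y in (0:ℝ)..1, pfluct f y = 0 := by
  unfold pfluct
  rw [intervalIntegral.integral_sub (hf.intervalIntegrable 0 1)
    (intervalIntegrable_const)]
  simp [pmean]

lemma primitive_hasDerivAt {f : ℝ → ℝ} (hf : Continuous f) (y : ℝ) :
    HasDerivAt (fun u => ∫ ξ in (0:ℝ)..u, f ξ) (f y) y :=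
  intervalIntegral.integral_hasDerivAt_right (hf.intervalIntegrable 0 y)
    (hf.stronglyMeasurableAtFilter _ _) hf.continuousAt

lemma pbracket_hasDerivAt {f : ℝ → ℝ} (hf : Continuous f) (y : ℝ) :
    HasDerivAt (pbracket f) (pfluct f y) y := by
  unfold pbracket
  exact (primitive_hasDerivAt (pfluct_cont hf) y).sub_const _

lemma pbracket_cont {f : ℝ → ℝ} (hf : Continuous f) : Continuous (pbracket f) := by
  have : Differentiable ℝ (pbracket f) := fun y => (pbracket_hasDerivAt hf y).differentiableAt
  exact this.continuous

lemma pmean_pbracket {f : ℝ → ℝ} (hf : Continuous f) : pmean (pbracket f) = 0 := by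
  have hd : Differentiable ℝ (fun u => ∫ ξ in (0:ℝ)..u, pfluct f ξ) :=
    fun y => (primitive_hasDerivAt (pfluct_cont hf) y).differentiableAt
  have hc := hd.continuous
  unfold pmean pbracket
  rw [intervalIntegral.integral_sub (hc.intervalIntegrable 0 1) intervalIntegrable_const]
  simp

lemma pbracket_periodic {f : ℝ → ℝ} (hf : Continuous f) (hp : Periodic f 1) :
    Periodic (pbracket f) 1 := by
  intro y
  have hpf : Periodic (pfluct f) 1 := fun x => by simp [pfluct, hp x]
  have h1 : ∫ ξ in (0:ℝ)..(y + 1), pfluct f ξ = ∫ ξ in (0:ℝ)..y, pfluct f ξ := by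
    rw [← intervalIntegral.integral_add_adjacent_intervals
      ((pfluct_cont hf).intervalIntegrable 0 y) ((pfluct_cont hf).intervalIntegrable y (y+1))]
    rw [hpf.intervalIntegral_add_eq y 0, zero_add, integral_pfluct hf, add_zero]
  unfold pbracket
  rw [h1]

/-- Integration by parts identity: `⟨f·[[g]]⟩ = -⟨[[f]]·g⟩` for continuous periodic `f, g`. -/
lemma ibp {f g : ℝ → ℝ} (hf : Continuous f) (hg : Continuous g)
    (hpf : Periodic f 1) (hpg : Periodic g 1) :
    pmean (fun y => f y * pbracket g y) = -pmean (fun y => pbracket f y * g y) := by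
  have hbf := pbracket_cont hf
  have hbg := pbracket_cont hg
  have hH : ∀ x ∈ Set.uIcc (0:ℝ) 1, HasDerivAt (fun y => pbracket f y * pbracket g y)
      (pfluct f x * pbracket g x + pbracket f x * pfluct g x) x := fun x _ =>
    (pbracket_hasDerivAt hf x).mul (pbracket_hasDerivAt hg x)
  have hint : IntervalIntegrable
      (fun x => pfluct f x * pbracket g x + pbracket f x * pfluct g x) volume 0 1 :=
    (((pfluct_cont hf).mul hbg).add (hbf.mul (pfluct_cont hg))).intervalIntegrable 0 1
  have key : ∫ x in (0:ℝ)..1, (pfluct f x * pbracket g x + pbracket f x * pfluct g x) = 0 := by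
    rw [intervalIntegral.integral_eq_sub_of_hasDerivAt hH hint]
    have h1 := pbracket_periodic hf hpf 0
    have h2 := pbracket_periodic hg hpg 0
    rw [zero_add] at h1 h2
    rw [h1, h2, sub_self]
  rw [intervalIntegral.integral_add (by exact ((pfluct_cont hf).mul hbg |>.intervalIntegrable 0 1) :
      IntervalIntegrable (fun x => pfluct f x * pbracket g x) volume 0 1)
    (by exact ((hbf.mul (pfluct_cont hg)).intervalIntegrable 0 1) :
      IntervalIntegrable (fun x => pbracket f x * pfluct g x) volume 0 1)] at key
  have e1 : pmean (fun y => f y * pbracket g y)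
      = ∫ x in (0:ℝ)..1, pfluct f x * pbracket g x := by
    unfold pmean
    have : ∀ x, f x * pbracket g x = pfluct f x * pbracket g x + pmean f * pbracket g x := by
      intro x; unfold pfluct; ring
    simp_rw [this]
    rw [intervalIntegral.integral_add (by exact ((pfluct_cont hf).mul hbg |>.intervalIntegrable 0 1) :
        IntervalIntegrable (fun x => pfluct f x * pbracket g x) volume 0 1)
      (by exact ((continuous_const.mul hbg).intervalIntegrable 0 1) :
        IntervalIntegrable (fun x => pmean f * pbracket g x) volume 0 1),
      intervalIntegral.integral_const_mul]
    have := pmean_pbracket hg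
    unfold pmean at this
    rw [this, mul_zero, add_zero]
  have e2 : pmean (fun y => pbracket f y * g y)
      = ∫ x in (0:ℝ)..1, pbracket f x * pfluct g x := by
    unfold pmean
    have : ∀ x, pbracket f x * g x = pbracket f x * pfluct g x + pbracket f x * pmean g := by
      intro x; unfold pfluct; ring
    simp_rw [this]
    rw [intervalIntegral.integral_add (by exact ((hbf.mul (pfluct_cont hg)).intervalIntegrable 0 1) :
        IntervalIntegrable (fun x => pbracket f x * pfluct g x) volume 0 1)
      (by exact ((hbf.mul continuous_const).intervalIntegrable 0 1) :
        IntervalIntegrable (fun x => pbracket f x * pmean g) volume 0 1),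
      intervalIntegral.integral_mul_const]
    have := pmean_pbracket hf
    unfold pmean at this
    rw [this, zero_mul, add_zero]
  rw [e1, e2]
  linarith [key]

variable {a : ℝ → ℝ}

lemma deriv_periodic (ha : ContDiff ℝ 1 a) (hper : Periodic a 1) :
    Periodic (deriv a) 1 := by
  intro y
  have h : (fun x => a (x + 1)) = a := funext hper
  conv_rhs => rw [← h]
  rw [deriv_comp_add_const]

lemma hasDerivAt_inv_sq (ha : ContDiff ℝ 1 a) (hpos : ∀ y, 0 < a y) (y : ℝ) :
    HasDerivAt (fun z => (a z ^ 2)⁻¹) (-2 * ((a y ^ 3)⁻¹ * deriv a y)) y := by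
  have hd : HasDerivAt a (deriv a y) y := ((ha.differentiable one_ne_zero) y).hasDerivAt
  have h2 : HasDerivAt (fun z => a z ^ 2) (2 * a y ^ (2-1) * deriv a y) y := hd.pow 2
  have hne : a y ^ 2 ≠ 0 := pow_ne_zero _ (hpos y).ne'
  refine (h2.inv hne).congr_deriv ?_
  have hne' : a y ≠ 0 := (hpos y).ne'
  field_simp
  ring

lemma g_cont (ha : ContDiff ℝ 1 a) (hpos : ∀ y, 0 < a y) :
    Continuous (fun z => (a z ^ 3)⁻¹ * deriv a z) :=
  ((ha.continuous.pow 3).inv₀ (fun y => pow_ne_zero _ (hpos y).ne')).mul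
    (ha.continuous_deriv le_rfl)

lemma h_cont (ha : ContDiff ℝ 1 a) (hpos : ∀ y, 0 < a y) :
    Continuous (fun z => (a z ^ 2)⁻¹) :=
  (ha.continuous.pow 2).inv₀ (fun y => pow_ne_zero _ (hpos y).ne')

lemma g_periodic (ha : ContDiff ℝ 1 a) (hper : Periodic a 1) :
    Periodic (fun z => (a z ^ 3)⁻¹ * deriv a z) 1 := fun x => by
  simp only [hper x, deriv_periodic ha hper x]

lemma h_periodic (hper : Periodic a 1) :
    Periodic (fun z => (a z ^ 2)⁻¹) 1 := fun x => by simp only [hper x]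

/-- The key closed form: `[[a⁻³a′]] = -(1/2){a⁻²}`. -/
lemma pbracket_g_eq (ha : ContDiff ℝ 1 a) (hper : Periodic a 1) (hpos : ∀ y, 0 < a y) :
    pbracket (fun z => (a z ^ 3)⁻¹ * deriv a z)
      = fun y => -(1/2) * pfluct (fun z => (a z ^ 2)⁻¹) y := by
  set g : ℝ → ℝ := fun z => (a z ^ 3)⁻¹ * deriv a z with hg
  set h : ℝ → ℝ := fun z => (a z ^ 2)⁻¹ with hh
  have hF : ∀ y : ℝ, ∀ x ∈ Set.uIcc (0:ℝ) y,
      HasDerivAt (fun z => -(1/2) * h z) (g x) x := by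
    intro y x _
    have := (hasDerivAt_inv_sq ha hpos x).const_mul (-(1/2) : ℝ)
    refine this.congr_deriv ?_
    simp only [hg]
    ring
  have hFeval : ∀ y : ℝ, ∫ x in (0:ℝ)..y, g x = -(1/2) * h y + (1/2) * h 0 := by
    intro y
    rw [intervalIntegral.integral_eq_sub_of_hasDerivAt (hF y)
      ((g_cont ha hpos).intervalIntegrable 0 y)]
    ring
  have hmg : pmean g = 0 := by
    unfold pmean
    rw [hFeval 1]
    have ha10 : a 1 = a 0 := by have := hper 0; rwa [zero_add] at this
    simp [hh, ha10]
  have hfg : pfluct g = g := by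
    funext x; simp [pfluct, hmg]
  funext y
  unfold pbracket
  rw [hfg]
  simp_rw [hFeval]
  rw [intervalIntegral.integral_add (by exact
      ((continuous_const.mul (h_cont ha hpos)).intervalIntegrable 0 1) :
      IntervalIntegrable (fun s => -(1/2) * h s) volume 0 1)
    intervalIntegrable_const,
    intervalIntegral.integral_const_mul]
  have hmh : ∫ s in (0:ℝ)..1, h s = pmean h := rfl
  rw [hmh]
  simp [pfluct]
  ring

end Aux

/-- For `a` continuously differentiable, 1-periodic and strictly positive,
`⟨a⁻³a′·[[[[a]]]]⟩ = ⟨a·[[[[a⁻³a′]]]]⟩ = −(1/2)⟨a·[[a⁻²]]⟩`. -/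
theorem statement7 (a : ℝ → ℝ) (ha : ContDiff ℝ 1 a) (hper : Function.Periodic a 1)
    (hpos : ∀ y, 0 < a y) :
    pmean (fun y => (a y ^ 3)⁻¹ * deriv a y * pbracket (pbracket a) y)
      = pmean (fun y => a y * pbracket (pbracket (fun z => (a z ^ 3)⁻¹ * deriv a z)) y) ∧
    pmean (fun y => (a y ^ 3)⁻¹ * deriv a y * pbracket (pbracket a) y)
      = -(1/2) * pmean (fun y => a y * pbracket (fun z => (a z ^ 2)⁻¹) y) := by
  set g : ℝ → ℝ := fun z => (a z ^ 3)⁻¹ * deriv a z with hgdef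
  set h : ℝ → ℝ := fun z => (a z ^ 2)⁻¹ with hhdef
  have hca : Continuous a := ha.continuous
  have hcg : Continuous g := g_cont ha hpos
  have hch : Continuous h := h_cont ha hpos
  have hpg : Function.Periodic g 1 := g_periodic ha hper
  have hph : Function.Periodic h 1 := h_periodic hper
  have hba : Continuous (pbracket a) := pbracket_cont hca
  have hpba : Function.Periodic (pbracket a) 1 := pbracket_periodic hca hper
  have hbg : Continuous (pbracket g) := pbracket_cont hcg
  have hpbg : Function.Periodic (pbracket g) 1 := pbracket_periodic hcg hpg
  -- step 1
  have step1 : pmean (fun y => g y * pbracket (pbracket a) y)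
      = -pmean (fun y => pbracket g y * pbracket a y) := ibp hcg hba hpg hpba
  -- step 2
  have step2 : pmean (fun y => pbracket g y * pbracket a y)
      = -pmean (fun y => pbracket (pbracket g) y * a y) := ibp hbg hca hpbg hper
  have goal1 : pmean (fun y => g y * pbracket (pbracket a) y)
      = pmean (fun y => a y * pbracket (pbracket g) y) := by
    rw [step1, step2, neg_neg]
    simp_rw [mul_comm]
  -- step 3: use the closed form of [[g]]
  have step3 : pmean (fun y => pbracket g y * pbracket a y)
      = -(1/2) * pmean (fun y => h y * pbracket a y) := by
    have hE := pbracket_g_eq ha hper hpos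
    rw [← hgdef, ← hhdef] at hE
    simp_rw [hE]
    have expand : ∀ y, -(1/2) * pfluct h y * pbracket a y
        = -(1/2) * (h y * pbracket a y) - (-(1/2) * pmean h) * pbracket a y := by
      intro y; unfold pfluct; ring
    simp_rw [expand]
    unfold pmean
    rw [intervalIntegral.integral_sub
      (by exact ((continuous_const.mul (hch.mul hba)).intervalIntegrable 0 1) :
        IntervalIntegrable (fun y => -(1/2) * (h y * pbracket a y)) volume 0 1)
      (by exact ((continuous_const.mul hba).intervalIntegrable 0 1) :
        IntervalIntegrable (fun y => (-(1/2) * ∫ y in (0:ℝ)..1, h y) * pbracket a y) volume 0 1),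
      intervalIntegral.integral_const_mul, intervalIntegral.integral_const_mul]
    have := pmean_pbracket hca
    unfold pmean at this
    rw [this, mul_zero, sub_zero]
  have step4 : pmean (fun y => h y * pbracket a y)
      = -pmean (fun y => pbracket h y * a y) := ibp hch hca hph hper
  have goal2 : pmean (fun y => g y * pbracket (pbracket a) y)
      = -(1/2) * pmean (fun y => a y * pbracket h y) := by
    rw [step1, step3, step4]
    simp_rw [mul_comm (a _) (pbracket h _)]
    ring
  exact ⟨goal1, goal2⟩
end

section
/- Let a : ℝ → ℝ be continuously differentiable, 1-periodic, and strictly positive. Then ⟨a⁻³a′·[[a·[[a⁻³a′]]]]⟩ = −(1/4)(⟨a⁻³⟩ + ⟨a⟩⟨a⁻²⟩² − 2⟨a⁻¹⟩⟨a⁻²⟩). (This is the closed form of the homogenization coefficient C₆, up to the factor 1/ρ⁽⁰⁾².) -/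
open MeasureTheory Matrix

/-- For `a` continuously differentiable, 1-periodic and strictly positive,
`⟨a⁻³a′·[[a·[[a⁻³a′]]]]⟩ = −(1/4)(⟨a⁻³⟩ + ⟨a⟩⟨a⁻²⟩² − 2⟨a⁻¹⟩⟨a⁻²⟩)`. -/
theorem statement8 (a : ℝ → ℝ) (ha : ContDiff ℝ 1 a) (hper : Function.Periodic a 1)
    (hpos : ∀ y, 0 < a y) :
    pmean (fun y => (a y ^ 3)⁻¹ * deriv a y
        * pbracket (fun z => a z * pbracket (fun w => (a w ^ 3)⁻¹ * deriv a w) z) y)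
      = -(1/4) * (pmean (fun y => (a y ^ 3)⁻¹)
          + pmean a * (pmean (fun y => (a y ^ 2)⁻¹))^2
          - 2 * pmean (fun y => (a y)⁻¹) * pmean (fun y => (a y ^ 2)⁻¹)) := by
  have hd : ∀ y, HasDerivAt a (deriv a y) y := fun y =>
    (ha.differentiable one_ne_zero y).hasDerivAt
  have hca : Continuous a := ha.continuous
  have hcd : Continuous (deriv a) := ha.continuous_deriv le_rfl
  have hne : ∀ y, a y ≠ 0 := fun y => (hpos y).ne'
  set b : ℝ → ℝ := fun w => (a w ^ 3)⁻¹ * deriv a w with hbdef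
  have hcb : Continuous b :=
    ((hca.pow 3).inv₀ fun y => pow_ne_zero _ (hne y)).mul hcd
  set F : ℝ → ℝ := fun y => -(1/2) * (a y ^ 2)⁻¹ with hFdef
  have hF : ∀ y, HasDerivAt F (b y) y := by
    intro y
    have h1 : HasDerivAt (fun y => a y ^ 2) (2 * a y ^ 1 * deriv a y) y := by
      simpa using (hd y).fun_pow 2
    have h2 := (h1.inv (pow_ne_zero 2 (hne y))).const_mul (-(1/2) : ℝ)
    refine HasDerivAt.congr_deriv h2 ?_
    have h3 := hne y
    simp only [hbdef]
    field_simp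
  have hcF : Continuous F :=
    continuous_const.mul ((hca.pow 2).inv₀ fun y => pow_ne_zero _ (hne y))
  have ha10 : a 1 = a 0 := by simpa using hper 0
  -- mean of b is zero
  have hFtc : ∀ y : ℝ, (∫ ξ in (0:ℝ)..y, b ξ) = F y - F 0 := fun y =>
    intervalIntegral.integral_eq_sub_of_hasDerivAt (fun x _ => hF x)
      (hcb.intervalIntegrable 0 y)
  have hmb : pmean b = 0 := by
    rw [pmean, hFtc 1]
    simp [hFdef, ha10]
  have hfb : pfluct b = b := by
    funext y; simp [pfluct, hmb]
  -- explicit form of pbracket b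
  set cF : ℝ := ∫ s in (0:ℝ)..1, F s with hcFdef
  have hpb : ∀ y, pbracket b y = F y - cF := by
    intro y
    rw [pbracket]
    simp only [hfb, hFtc]
    rw [intervalIntegral.integral_sub (hcF.intervalIntegrable 0 1)
      (intervalIntegrable_const)]
    have hF0 : F 0 = -(1/2) * (a 0 ^ 2)⁻¹ := rfl
    simp only [intervalIntegral.integral_const, smul_eq_mul, sub_zero, one_mul, hF0]
    rw [hcFdef]
    ring
  -- g = a * pbracket b
  set g : ℝ → ℝ := fun z => a z * (F z - cF) with hgdef
  have hgeq : (fun z => a z * pbracket b z) = g := by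
    funext z; rw [hpb z]
  have hcg : Continuous g := hca.mul (hcF.sub continuous_const)
  set cg : ℝ := ∫ s in (0:ℝ)..1, g s with hcgdef
  have hmg : pmean g = cg := rfl
  have hfg : pfluct g = fun z => g z - cg := by
    funext z; rw [pfluct, hmg]
  have hcg' : Continuous (fun z => g z - cg) := hcg.sub continuous_const
  set G : ℝ → ℝ := fun y => ∫ ξ in (0:ℝ)..y, (g ξ - cg) with hGdef
  have hG : ∀ y, HasDerivAt G (g y - cg) y := fun y =>
    intervalIntegral.integral_hasDerivAt_right (hcg'.intervalIntegrable 0 y)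
      (hcg'.aestronglyMeasurable.stronglyMeasurableAtFilter)
      hcg'.continuousAt
  have hcG : Continuous G := by
    have : Differentiable ℝ G := fun y => (hG y).differentiableAt
    exact this.continuous
  have hG0 : G 0 = 0 := intervalIntegral.integral_same
  have hG1 : G 1 = 0 := by
    show (∫ ξ in (0:ℝ)..1, (g ξ - cg)) = 0
    rw [intervalIntegral.integral_sub (hcg.intervalIntegrable 0 1)
      intervalIntegrable_const]
    simp [hcgdef]
  set cG : ℝ := ∫ s in (0:ℝ)..1, G s with hcGdef
  have hpg : ∀ y, pbracket g y = G y - cG := by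
    intro y
    rw [pbracket]
    simp only [hfg, hGdef, hcGdef]
  -- rewrite goal integrand
  rw [pmean, hgeq]
  have hrw : ∀ y, b y * pbracket g y = b y * G y - cG * b y := by
    intro y; rw [hpg y]; ring
  rw [intervalIntegral.integral_congr (fun y _ => hrw y)]
  rw [intervalIntegral.integral_sub (f := fun y => b y * G y) (g := fun y => cG * b y) ((hcb.mul hcG).intervalIntegrable 0 1)
    ((continuous_const.mul hcb).intervalIntegrable 0 1)]
  rw [intervalIntegral.integral_const_mul]
  have hintb0 : (∫ y in (0:ℝ)..1, b y) = 0 := hmb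
  rw [hintb0, mul_zero, sub_zero]
  -- integration by parts : ∫ G * b = G1 F1 - G0 F0 - ∫ (g - cg) * F
  have hibp := intervalIntegral.integral_mul_deriv_eq_deriv_mul
    (u := G) (v := F) (u' := fun y => g y - cg) (v' := b) (a := 0) (b := 1)
    (fun x _ => hG x) (fun x _ => hF x)
    (hcg'.intervalIntegrable 0 1) (hcb.intervalIntegrable 0 1)
  have hbG : (∫ y in (0:ℝ)..1, b y * G y) = - ∫ y in (0:ℝ)..1, (g y - cg) * F y := by
    have hcomm : (∫ y in (0:ℝ)..1, b y * G y) = ∫ y in (0:ℝ)..1, G y * b y := by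
      congr 1; funext y; ring
    rw [hcomm, hibp, hG1, hG0]
    ring
  rw [hbG]
  -- simplify ∫ (g - cg) F = ∫ g (F - cF)  (since ∫ (F - cF) = 0 and ∫ g = cg)
  have hintF0 : (∫ y in (0:ℝ)..1, (F y - cF)) = 0 := by
    rw [intervalIntegral.integral_sub (hcF.intervalIntegrable 0 1)
      intervalIntegrable_const]
    simp [hcFdef]
  have hkey : (∫ y in (0:ℝ)..1, (g y - cg) * F y)
      = ∫ y in (0:ℝ)..1, a y * (F y - cF) ^ 2 := by
    have hexp : ∀ y, (g y - cg) * F y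
        = a y * (F y - cF) ^ 2 + cF * (g y - cg) - cg * (F y - cF) := by
      intro y; rw [hgdef]; ring
    rw [intervalIntegral.integral_congr (fun y _ => hexp y)]
    rw [intervalIntegral.integral_sub, intervalIntegral.integral_add]
    · rw [intervalIntegral.integral_const_mul, intervalIntegral.integral_const_mul,
        hintF0]
      have : (∫ y in (0:ℝ)..1, (g y - cg)) = 0 := by
        rw [intervalIntegral.integral_sub (hcg.intervalIntegrable 0 1)
          intervalIntegrable_const]
        simp [hcgdef]
      rw [this]; ring
    · exact (hca.mul ((hcF.sub continuous_const).pow 2)).intervalIntegrable 0 1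
    · exact (continuous_const.mul hcg').intervalIntegrable 0 1
    · exact ((hca.mul ((hcF.sub continuous_const).pow 2)).add
        (continuous_const.mul hcg')).intervalIntegrable 0 1
    · exact (continuous_const.mul (hcF.sub continuous_const)).intervalIntegrable 0 1
  rw [hkey]
  -- compute cF
  have hcFval : cF = -(1/2) * pmean (fun y => (a y ^ 2)⁻¹) := by
    rw [hcFdef, pmean, hFdef]
    rw [intervalIntegral.integral_const_mul]
  -- expand the integrand
  set m2 : ℝ := pmean (fun y => (a y ^ 2)⁻¹) with hm2
  have hexp2 : ∀ y, a y * (F y - cF) ^ 2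
      = (1/4) * ((a y ^ 3)⁻¹ - 2 * m2 * (a y)⁻¹ + m2 ^ 2 * a y) := by
    intro y
    rw [hFdef, hcFval]
    have h := hne y
    field_simp
    ring
  rw [intervalIntegral.integral_congr (fun y _ => hexp2 y)]
  rw [intervalIntegral.integral_const_mul]
  rw [intervalIntegral.integral_add, intervalIntegral.integral_sub]
  · rw [intervalIntegral.integral_const_mul, intervalIntegral.integral_const_mul]
    show -((1/4) * (pmean (fun y => (a y ^ 3)⁻¹)
        - 2 * m2 * pmean (fun y => (a y)⁻¹) + m2 ^ 2 * pmean a)) = _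
    ring
  · exact ((hca.pow 3).inv₀ fun y => pow_ne_zero _ (hne y)).intervalIntegrable 0 1
  · exact (continuous_const.mul (hca.inv₀ hne)).intervalIntegrable 0 1
  · exact (((hca.pow 3).inv₀ fun y => pow_ne_zero _ (hne y)).sub
      (continuous_const.mul (hca.inv₀ hne))).intervalIntegrable 0 1
  · exact (continuous_const.mul hca).intervalIntegrable 0 1
end

section
/- Let a : ℝ → ℝ be continuously differentiable, 1-periodic, and strictly positive. Then ⟨a⁻³a′·[[a·[[a⁻¹]]]]⟩ = ⟨a⁻¹·[[a·[[a⁻³a′]]]]⟩ = (1/2)⟨a⁻²⟩·⟨a⁻¹·[[a]]⟩. (This is the closed form of the homogenization coefficient C₇, up to the factor 1/ρ⁽⁰⁾, expressed via C₁ = ⟨a⁻¹·[[a]]⟩.) -/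
open MeasureTheory Matrix

namespace S9

lemma pfluct_cont {b : ℝ → ℝ} (hb : Continuous b) : Continuous (pfluct b) :=
  hb.sub continuous_const

lemma primitive_hasDerivAt {b : ℝ → ℝ} (hb : Continuous b) (y : ℝ) :
    HasDerivAt (fun u => ∫ ξ in (0:ℝ)..u, b ξ) (b y) y :=
  intervalIntegral.integral_hasDerivAt_right (hb.intervalIntegrable _ _)
    hb.aestronglyMeasurable.stronglyMeasurableAtFilter hb.continuousAt

lemma primitive_continuous {b : ℝ → ℝ} (hb : Continuous b) :
    Continuous (fun u => ∫ ξ in (0:ℝ)..u, b ξ) := by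
  have : Differentiable ℝ (fun u => ∫ ξ in (0:ℝ)..u, b ξ) :=
    fun y => (primitive_hasDerivAt hb y).differentiableAt
  exact this.continuous

lemma pbracket_hasDerivAt {b : ℝ → ℝ} (hb : Continuous b) (y : ℝ) :
    HasDerivAt (pbracket b) (pfluct b y) y := by
  have h1 := primitive_hasDerivAt (pfluct_cont hb) y
  exact h1.sub_const (∫ s in (0:ℝ)..1, (∫ ξ in (0:ℝ)..s, pfluct b ξ))

lemma pbracket_continuous {b : ℝ → ℝ} (hb : Continuous b) : Continuous (pbracket b) :=
  (primitive_continuous (pfluct_cont hb)).sub continuous_const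

lemma pmean_pfluct {b : ℝ → ℝ} (hb : Continuous b) : pmean (pfluct b) = 0 := by
  rw [pmean]
  unfold pfluct
  rw [intervalIntegral.integral_sub (hb.intervalIntegrable _ _) intervalIntegrable_const]
  simp [pmean]

lemma pmean_pbracket {b : ℝ → ℝ} (hb : Continuous b) : pmean (pbracket b) = 0 := by
  rw [pmean]
  unfold pbracket
  rw [intervalIntegral.integral_sub
    ((primitive_continuous (pfluct_cont hb)).intervalIntegrable _ _) intervalIntegrable_const]
  simp

lemma pfluct_periodic {b : ℝ → ℝ} (hper : Function.Periodic b 1) :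
    Function.Periodic (pfluct b) 1 := fun x => by simp [pfluct, hper x]

lemma pbracket_periodic {b : ℝ → ℝ} (hb : Continuous b) (hper : Function.Periodic b 1) :
    Function.Periodic (pbracket b) 1 := by
  intro x
  have hc : Continuous (pfluct b) := pfluct_cont hb
  have h1 : (∫ ξ in (0:ℝ)..x+1, pfluct b ξ)
      = (∫ ξ in (0:ℝ)..x, pfluct b ξ) + ∫ ξ in x..x+1, pfluct b ξ :=
    (intervalIntegral.integral_add_adjacent_intervals
      (hc.intervalIntegrable _ _) (hc.intervalIntegrable _ _)).symm
  have h2 : (∫ ξ in x..x+1, pfluct b ξ) = ∫ ξ in (0:ℝ)..(0+1:ℝ), pfluct b ξ :=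
    (pfluct_periodic hper).intervalIntegral_add_eq x 0
  have h3 : (∫ ξ in (0:ℝ)..1, pfluct b ξ) = 0 := pmean_pfluct hb
  simp only [pbracket, h1, h2, zero_add, h3, add_zero]

lemma ibp {u v u' v' : ℝ → ℝ} (hu : ∀ y, HasDerivAt u (u' y) y)
    (hv : ∀ y, HasDerivAt v (v' y) y)
    (hu' : Continuous u') (hv' : Continuous v')
    (hup : Function.Periodic u 1) (hvp : Function.Periodic v 1) :
    (∫ y in (0:ℝ)..1, u' y * v y) = - ∫ y in (0:ℝ)..1, u y * v' y := by
  have huc : Continuous u := Differentiable.continuous fun y => (hu y).differentiableAt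
  have hvc : Continuous v := Differentiable.continuous fun y => (hv y).differentiableAt
  have key : (∫ y in (0:ℝ)..1, (u' y * v y + u y * v' y)) = u 1 * v 1 - u 0 * v 0 :=
    intervalIntegral.integral_eq_sub_of_hasDerivAt (fun y _ => (hu y).mul (hv y))
      (((hu'.mul hvc).add (huc.mul hv')).intervalIntegrable _ _)
  rw [intervalIntegral.integral_add (f := fun y => u' y * v y) (g := fun y => u y * v' y)
    ((hu'.mul hvc).intervalIntegrable _ _)
    ((huc.mul hv').intervalIntegrable _ _)] at key
  have h1 : u 1 = u 0 := by simpa using hup 0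
  have h2 : v 1 = v 0 := by simpa using hvp 0
  rw [h1, h2] at key
  linarith

lemma mean_mul_pbracket_reduce {f g : ℝ → ℝ} (hf : Continuous f) (hg : Continuous g) :
    pmean (fun y => f y * pbracket g y) = ∫ y in (0:ℝ)..1, pfluct f y * pbracket g y := by
  have hgb := pbracket_continuous hg
  have : pmean (fun y => f y * pbracket g y)
      = (∫ y in (0:ℝ)..1, pfluct f y * pbracket g y)
        + pmean f * ∫ y in (0:ℝ)..1, pbracket g y := by
    rw [pmean, ← intervalIntegral.integral_const_mul,
      ← intervalIntegral.integral_add (f := fun y => pfluct f y * pbracket g y)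
        (g := fun x => pmean f * pbracket g x)
        (((pfluct_cont hf).mul hgb).intervalIntegrable _ _)
        ((continuous_const.mul hgb).intervalIntegrable _ _)]
    congr 1; funext y; simp [pfluct]; ring
  rw [this]
  have : (∫ y in (0:ℝ)..1, pbracket g y) = 0 := pmean_pbracket hg
  rw [this]; ring

lemma antisym {f g : ℝ → ℝ} (hf : Continuous f) (hg : Continuous g)
    (hfp : Function.Periodic f 1) (hgp : Function.Periodic g 1) :
    pmean (fun y => f y * pbracket g y) = - pmean (fun y => g y * pbracket f y) := by
  rw [mean_mul_pbracket_reduce hf hg, mean_mul_pbracket_reduce hg hf]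
  have key : (∫ y in (0:ℝ)..1, pfluct f y * pbracket g y)
      = - ∫ y in (0:ℝ)..1, pbracket f y * pfluct g y :=
    ibp (pbracket_hasDerivAt hf) (pbracket_hasDerivAt hg)
      (pfluct_cont hf) (pfluct_cont hg)
      (pbracket_periodic hf hfp) (pbracket_periodic hg hgp)
  rw [key]
  congr 1
  congr 1
  funext y; ring

lemma mean_mul_pbracket_self {f : ℝ → ℝ} (hf : Continuous f)
    (hfp : Function.Periodic f 1) :
    pmean (fun y => f y * pbracket f y) = 0 := by
  have := antisym hf hf hfp hfp
  linarith

lemma pbracket_eq_pfluct {h g : ℝ → ℝ} (hg : Continuous g)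
    (hd : ∀ y, HasDerivAt h (g y) y) (hp : Function.Periodic h 1) :
    pbracket g = pfluct h := by
  have hc : Continuous h := Differentiable.continuous fun y => (hd y).differentiableAt
  have hm : pmean g = 0 := by
    rw [pmean, intervalIntegral.integral_eq_sub_of_hasDerivAt (fun y _ => hd y)
      (hg.intervalIntegrable _ _)]
    have h1 : h 1 = h 0 := by simpa using hp 0
    rw [h1]; ring
  have hfl : pfluct g = g := by funext y; simp [pfluct, hm]
  have hint : ∀ y : ℝ, (∫ ξ in (0:ℝ)..y, g ξ) = h y - h 0 := fun y =>
    intervalIntegral.integral_eq_sub_of_hasDerivAt (fun t _ => hd t)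
      (hg.intervalIntegrable _ _)
  funext y
  simp only [pbracket, hfl, hint]
  rw [intervalIntegral.integral_sub (hc.intervalIntegrable _ _) intervalIntegrable_const]
  simp [pfluct, pmean]

lemma pmean_comb {f g : ℝ → ℝ} (hf : Continuous f) (hg : Continuous g) (c d : ℝ) :
    pmean (fun y => c * f y + d * g y) = c * pmean f + d * pmean g := by
  rw [pmean, pmean, pmean, ← intervalIntegral.integral_const_mul,
    ← intervalIntegral.integral_const_mul,
    ← intervalIntegral.integral_add (f := fun x => c * f x) (g := fun x => d * g x)
      ((continuous_const.mul hf).intervalIntegrable _ _)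
      ((continuous_const.mul hg).intervalIntegrable _ _)]

lemma pbracket_comb {f g : ℝ → ℝ} (hf : Continuous f) (hg : Continuous g) (c d : ℝ) :
    pbracket (fun z => c * f z + d * g z)
      = fun y => c * pbracket f y + d * pbracket g y := by
  have hfl : pfluct (fun z => c * f z + d * g z)
      = fun z => c * pfluct f z + d * pfluct g z := by
    funext z; simp only [pfluct, pmean_comb hf hg]; ring
  have I1 : ∀ t : ℝ, (∫ ξ in (0:ℝ)..t, (c * pfluct f ξ + d * pfluct g ξ))
      = c * (∫ ξ in (0:ℝ)..t, pfluct f ξ) + d * ∫ ξ in (0:ℝ)..t, pfluct g ξ := by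
    intro t
    rw [intervalIntegral.integral_add (f := fun ξ => c * pfluct f ξ) (g := fun ξ => d * pfluct g ξ)
      ((continuous_const.mul (pfluct_cont hf)).intervalIntegrable _ _)
      ((continuous_const.mul (pfluct_cont hg)).intervalIntegrable _ _),
      intervalIntegral.integral_const_mul, intervalIntegral.integral_const_mul]
  funext y
  simp only [pbracket, hfl, I1]
  rw [intervalIntegral.integral_add (f := fun s => c * ∫ ξ in (0:ℝ)..s, pfluct f ξ)
    (g := fun s => d * ∫ ξ in (0:ℝ)..s, pfluct g ξ)
    ((continuous_const.mul (primitive_continuous (pfluct_cont hf))).intervalIntegrable _ _)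
    ((continuous_const.mul (primitive_continuous (pfluct_cont hg))).intervalIntegrable _ _),
    intervalIntegral.integral_const_mul, intervalIntegral.integral_const_mul]
  ring

end S9

/-- For `a` continuously differentiable, 1-periodic and strictly positive,
`⟨a⁻³a′·[[a·[[a⁻¹]]]]⟩ = ⟨a⁻¹·[[a·[[a⁻³a′]]]]⟩ = (1/2)⟨a⁻²⟩·⟨a⁻¹·[[a]]⟩`. -/
theorem statement9 (a : ℝ → ℝ) (ha : ContDiff ℝ 1 a) (hper : Function.Periodic a 1)
    (hpos : ∀ y, 0 < a y) :
    pmean (fun y => (a y ^ 3)⁻¹ * deriv a y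
        * pbracket (fun z => a z * pbracket (fun w => (a w)⁻¹) z) y)
      = pmean (fun y => (a y)⁻¹
          * pbracket (fun z => a z * pbracket (fun w => (a w ^ 3)⁻¹ * deriv a w) z) y) ∧
    pmean (fun y => (a y ^ 3)⁻¹ * deriv a y
        * pbracket (fun z => a z * pbracket (fun w => (a w)⁻¹) z) y)
      = (1/2) * pmean (fun y => (a y ^ 2)⁻¹) * pmean (fun y => (a y)⁻¹ * pbracket a y) := by
  have hane : ∀ y, a y ≠ 0 := fun y => (hpos y).ne'
  have ha_c : Continuous a := ha.continuous
  have hda_c : Continuous (deriv a) := ha.continuous_deriv le_rfl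
  have hdiff : ∀ y, HasDerivAt a (deriv a y) y :=
    fun y => (ha.differentiable one_ne_zero y).hasDerivAt
  have hinv_c : Continuous (fun y => (a y)⁻¹) := ha_c.inv₀ hane
  have hinv2_c : Continuous (fun y => (a y ^ 2)⁻¹) :=
    (ha_c.pow 2).inv₀ (fun y => pow_ne_zero 2 (hane y))
  have hq_c : Continuous (fun w => (a w ^ 3)⁻¹ * deriv a w) :=
    ((ha_c.pow 3).inv₀ (fun y => pow_ne_zero 3 (hane y))).mul hda_c
  have hinv_p : Function.Periodic (fun y => (a y)⁻¹) 1 := fun x => by simp [hper x]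
  -- h = -(1/2) (a²)⁻¹ is a periodic primitive of q = a⁻³ a′
  set h : ℝ → ℝ := fun y => -(1/2) * (a y ^ 2)⁻¹ with hh_def
  have hh_p : Function.Periodic h 1 := fun x => by simp [hh_def, hper x]
  have hhd : ∀ y, HasDerivAt h ((a y ^ 3)⁻¹ * deriv a y) y := by
    intro y
    have h1 : HasDerivAt (fun x => (a x ^ 2)⁻¹)
        (-(((2:ℕ):ℝ) * a y ^ (2-1) * deriv a y) / (a y ^ 2) ^ 2) y :=
      ((hdiff y).pow 2).inv (pow_ne_zero 2 (hane y))
    have h2 := h1.const_mul (-(1/2) : ℝ)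
    refine h2.congr_deriv ?_
    have := hane y
    field_simp
    ring
  have hpbq : pbracket (fun w => (a w ^ 3)⁻¹ * deriv a w) = pfluct h :=
    S9.pbracket_eq_pfluct hq_c hhd hh_p
  set M : ℝ := pmean (fun y => (a y ^ 2)⁻¹) with hM_def
  have hmean_h : pmean h = -(1/2) * M := by
    rw [hM_def, pmean, pmean, ← intervalIntegral.integral_const_mul]
  set C1 : ℝ := pmean (fun y => (a y)⁻¹ * pbracket a y) with hC1_def
  -- the inner function of B rewritten as a linear combination
  have hQ : (fun z => a z * pbracket (fun w => (a w ^ 3)⁻¹ * deriv a w) z)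
      = fun z => (-(1/2)) * (a z)⁻¹ + ((1/2) * M) * a z := by
    funext z
    rw [hpbq]
    simp only [pfluct]
    rw [hmean_h]
    simp only [hh_def]
    have := hane z
    field_simp
    ring
  -- B = (1/2) M C1
  have hB : pmean (fun y => (a y)⁻¹
      * pbracket (fun z => a z * pbracket (fun w => (a w ^ 3)⁻¹ * deriv a w) z) y)
      = (1/2) * M * C1 := by
    rw [hQ, S9.pbracket_comb hinv_c ha_c]
    have : (fun y => (a y)⁻¹ * ((-(1/2)) * pbracket (fun w => (a w)⁻¹) y
        + ((1/2) * M) * pbracket a y))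
        = fun y => (-(1/2)) * ((a y)⁻¹ * pbracket (fun w => (a w)⁻¹) y)
          + ((1/2) * M) * ((a y)⁻¹ * pbracket a y) := by
      funext y; ring
    rw [this, S9.pmean_comb (f := fun y => (a y)⁻¹ * pbracket (fun w => (a w)⁻¹) y)
      (g := fun y => (a y)⁻¹ * pbracket a y) (hinv_c.mul (S9.pbracket_continuous hinv_c))
      (hinv_c.mul (S9.pbracket_continuous ha_c))]
    rw [S9.mean_mul_pbracket_self hinv_c hinv_p, ← hC1_def]
    ring
  -- A via integration by parts
  set P : ℝ → ℝ := fun z => a z * pbracket (fun w => (a w)⁻¹) z with hP_def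
  have hP_c : Continuous P := ha_c.mul (S9.pbracket_continuous hinv_c)
  have hP_p : Function.Periodic P 1 := fun x => by
    simp only [hP_def, hper x, S9.pbracket_periodic hinv_c hinv_p x]
  have hA : pmean (fun y => (a y ^ 3)⁻¹ * deriv a y * pbracket P y) = (1/2) * M * C1 := by
    have hibp : (∫ y in (0:ℝ)..1, ((a y ^ 3)⁻¹ * deriv a y) * pbracket P y)
        = - ∫ y in (0:ℝ)..1, h y * pfluct P y :=
      S9.ibp hhd (S9.pbracket_hasDerivAt hP_c) hq_c (S9.pfluct_cont hP_c)
        hh_p (S9.pbracket_periodic hP_c hP_p)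
    have e1 : pmean (fun y => (a y ^ 3)⁻¹ * deriv a y * pbracket P y)
        = - ∫ y in (0:ℝ)..1, h y * pfluct P y := by
      rw [pmean]; rw [← hibp]
    rw [e1]
    -- h y * pfluct P y = (-(1/2)) * ((a y)⁻¹ * pbracket (a⁻¹) y) + ((1/2) * pmean P) * (a y^2)⁻¹
    have e2 : (fun y => h y * pfluct P y)
        = fun y => (-(1/2)) * ((a y)⁻¹ * pbracket (fun w => (a w)⁻¹) y)
          + ((1/2) * pmean P) * (a y ^ 2)⁻¹ := by
      funext y
      simp only [hh_def, pfluct, hP_def]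
      have := hane y
      field_simp
      ring
    have e3 : (∫ y in (0:ℝ)..1, h y * pfluct P y)
        = (-(1/2)) * pmean (fun y => (a y)⁻¹ * pbracket (fun w => (a w)⁻¹) y)
          + ((1/2) * pmean P) * M := by
      rw [show (∫ y in (0:ℝ)..1, h y * pfluct P y)
          = pmean (fun y => h y * pfluct P y) from rfl, e2,
        S9.pmean_comb (f := fun y => (a y)⁻¹ * pbracket (fun w => (a w)⁻¹) y)
          (g := fun y => (a y ^ 2)⁻¹) (hinv_c.mul (S9.pbracket_continuous hinv_c)) hinv2_c]
    have e4 : pmean (fun y => (a y)⁻¹ * pbracket (fun w => (a w)⁻¹) y) = 0 :=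
      S9.mean_mul_pbracket_self hinv_c hinv_p
    have e5 : pmean P = - C1 := by
      rw [hP_def, hC1_def]
      exact S9.antisym ha_c hinv_c hper hinv_p
    rw [e3, e4, e5]
    ring
  exact ⟨by rw [hA, hB], hA⟩
end
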